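/- Linear bound on the number of suffix tree internal nodes: for a collection T = (T_1, …, T_K) of texts of total length N = |T_1| + ⋯ + |T_K| ≥ 1, the number of distinct strings (possibly including the empty string) that are right-branching in T is at most N − 1. -/

import Mathlib

/-- `x` is a substring (contiguous factor) of some text of the collection `T`. -/
def IsSubstringOf {α : Type*} {K : ℕ} (T : Fin K → List α) (x : List α) : Prop :=
  ∃ k, x <:+: T k

/-- `x` is right-branching in `T`: two distinct characters can follow `x`. -/
def RightBranching {α : Type*} {K : ℕ} (T : Fin K → List α) (x : List α) : Prop :=
  ∃ a b : α, a ≠ b ∧ IsSubstringOf T (x ++ [a]) ∧ IsSubstringOf T (x ++ [b])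

section Aux

open scoped Classical

variable {α : Type*} {K : ℕ}

/-- uniqueness of the character following a prefix -/
lemma char_unique {x s : List α} {a b : α} (ha : x ++ [a] <+: s) (hb : x ++ [b] <+: s) :
    a = b := by
  rcases List.prefix_or_prefix_of_prefix ha hb with h | h
  · have := List.IsPrefix.eq_of_length h (by simp)
    simpa using List.append_cancel_left this
  · have := List.IsPrefix.eq_of_length h (by simp)
    simpa using (List.append_cancel_left this).symm

lemma exists_char {x s : List α} (h : x <+: s) (hne : x ≠ s) :
    ∃ c, x ++ [c] <+: s := by
  obtain ⟨t, rfl⟩ := h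
  cases t with
  | nil => simp at hne
  | cons c t => exact ⟨c, t, by simp⟩

/-- the finite set of "leaves": nonempty suffixes of the texts -/
noncomputable def Lset (T : Fin K → List α) : Finset (List α) :=
  Finset.univ.biUnion (fun k => ((T k).tails.toFinset.erase []))

lemma mem_Lset {T : Fin K → List α} {s : List α} :
    s ∈ Lset T ↔ s ≠ [] ∧ ∃ k, s <:+ T k := by
  simp [Lset, List.mem_tails, and_comm, exists_and_left]

lemma Lset_card (T : Fin K → List α) : (Lset T).card ≤ ∑ k, (T k).length := by
  refine (Finset.card_biUnion_le).trans (Finset.sum_le_sum fun k _ => ?_)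
  have h1 : ([] : List α) ∈ (T k).tails.toFinset := by simp [List.mem_tails]
  rw [Finset.card_erase_of_mem h1]
  have h2 : (T k).tails.toFinset.card ≤ (T k).length + 1 := by
    simpa [List.length_tails] using (T k).tails.toFinset_card_le
  omega

lemma exists_leaf {T : Fin K → List α} {y : List α} (hy : y ≠ [])
    (h : IsSubstringOf T y) : ∃ s ∈ Lset T, y <+: s := by
  obtain ⟨k, hk⟩ := h
  obtain ⟨t, hpre, hsuf⟩ := List.infix_iff_prefix_suffix.mp hk
  refine ⟨t, mem_Lset.2 ⟨?_, k, hsuf⟩, hpre⟩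
  rintro rfl
  exact hy (List.prefix_nil.mp hpre)

/-- leaves strictly below `x` -/
noncomputable def Qset (T : Fin K → List α) (x : List α) : Finset (List α) :=
  (Lset T).filter (fun s => x <+: s ∧ x ≠ s)

variable [LinearOrder (List α)]

/-- min leaf strictly below `x` -/
noncomputable def mfun (T : Fin K → List α) (x : List α) : List α :=
  if h : (Qset T x).Nonempty then (Qset T x).min' h else []

/-- leaves below `x` that deviate from the min leaf right after `x` -/
noncomputable def Rset (T : Fin K → List α) (x : List α) : Finset (List α) :=
  (Qset T x).filter (fun s => ∀ c, x ++ [c] <+: mfun T x → ¬ x ++ [c] <+: s)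

noncomputable def ffun (T : Fin K → List α) (x : List α) : List α :=
  if h : (Rset T x).Nonempty then (Rset T x).min' h else []

omit [LinearOrder (List α)] in
lemma Qset_sub {T : Fin K → List α} {x : List α} : Qset T x ⊆ Lset T :=
  Finset.filter_subset _ _

lemma Rset_nonempty {T : Fin K → List α} {x : List α} (hx : RightBranching T x) :
    (Rset T x).Nonempty := by
  obtain ⟨a, b, hab, ha, hb⟩ := hx
  obtain ⟨sa, hsa, hpa⟩ := exists_leaf (by simp) ha
  obtain ⟨sb, hsb, hpb⟩ := exists_leaf (by simp) hb
  have hQa : sa ∈ Qset T x := by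
    refine Finset.mem_filter.2 ⟨hsa, (List.prefix_append x [a]).trans hpa, ?_⟩
    rintro rfl
    have := hpa.length_le
    simp at this
  have hQb : sb ∈ Qset T x := by
    refine Finset.mem_filter.2 ⟨hsb, (List.prefix_append x [b]).trans hpb, ?_⟩
    rintro rfl
    have := hpb.length_le
    simp at this
  have hQ : (Qset T x).Nonempty := ⟨sa, hQa⟩
  have hm : mfun T x ∈ Qset T x := by
    rw [mfun, dif_pos hQ]; exact (Qset T x).min'_mem hQ
  obtain ⟨hmL, hmpre, hmne⟩ := Finset.mem_filter.1 hm
  obtain ⟨cm, hcm⟩ := exists_char hmpre hmne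
  have hcm' : x ++ [cm] <+: mfun T x := by
    rw [mfun, dif_pos hQ] at hcm ⊢; exact hcm
  by_cases hca : cm = a
  · refine ⟨sb, Finset.mem_filter.2 ⟨hQb, fun c hc hc' => ?_⟩⟩
    have h1 : c = cm := char_unique hc hcm'
    have h2 : c = b := char_unique hc' hpb
    exact hab (by rw [← hca, ← h1, h2])
  · refine ⟨sa, Finset.mem_filter.2 ⟨hQa, fun c hc hc' => ?_⟩⟩
    have h1 : c = cm := char_unique hc hcm'
    have h2 : c = a := char_unique hc' hpa
    exact hca (h1 ▸ h2 ▸ rfl)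


lemma Rset_sub {T : Fin K → List α} {x : List α} : Rset T x ⊆ Qset T x :=
  Finset.filter_subset _ _

lemma ffun_mem {T : Fin K → List α} {x : List α} (hx : RightBranching T x) :
    ffun T x ∈ Rset T x := by
  have hR := Rset_nonempty hx
  rw [ffun, dif_pos hR]
  exact (Rset T x).min'_mem hR

lemma ffun_le {T : Fin K → List α} {x s : List α} (hx : RightBranching T x)
    (hs : s ∈ Rset T x) : ffun T x ≤ s := by
  rw [ffun, dif_pos (Rset_nonempty hx)]
  exact Finset.min'_le _ _ hs

lemma mfun_mem {T : Fin K → List α} {x : List α} (hQ : (Qset T x).Nonempty) :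
    mfun T x ∈ Qset T x := by
  rw [mfun, dif_pos hQ]
  exact (Qset T x).min'_mem hQ

lemma mfun_le {T : Fin K → List α} {x s : List α} (hQ : (Qset T x).Nonempty)
    (hs : s ∈ Qset T x) : mfun T x ≤ s := by
  rw [mfun, dif_pos hQ]
  exact Finset.min'_le _ _ hs

lemma mfun_lt_ffun {T : Fin K → List α} {x : List α} (hx : RightBranching T x) :
    mfun T x < ffun T x := by
  have hf := ffun_mem hx
  have hfQ : ffun T x ∈ Qset T x := Rset_sub hf
  have hQ : (Qset T x).Nonempty := ⟨_, hfQ⟩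
  have hm := mfun_mem hQ
  obtain ⟨hmL, hmpre, hmne⟩ := Finset.mem_filter.1 hm
  obtain ⟨c, hc⟩ := exists_char hmpre hmne
  have hfR := (Finset.mem_filter.1 hf).2
  refine lt_of_le_of_ne (mfun_le hQ hfQ) (fun he => ?_)
  exact hfR c hc (he ▸ hc)

lemma inj_aux {T : Fin K → List α} {x y : List α} (hx : RightBranching T x)
    (hy : RightBranching T y) (hxy : x <+: y) (hne : x ≠ y)
    (hff : ffun T x = ffun T y) : False := by
  have hfy := ffun_mem hy
  have hfyQ : ffun T y ∈ Qset T y := Rset_sub hfy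
  have hQy : (Qset T y).Nonempty := ⟨_, hfyQ⟩
  have hmy := mfun_mem hQy
  obtain ⟨hmyL, hmypre, hmyne⟩ := Finset.mem_filter.1 hmy
  have hfx := ffun_mem hx
  have hfxR := (Finset.mem_filter.1 hfx).2
  have hyfx : y <+: ffun T x := hff ▸ (Finset.mem_filter.1 hfyQ).2.1
  have hlen : x.length < y.length := by
    refine lt_of_le_of_ne hxy.length_le (fun he => hne (hxy.eq_of_length he))
  -- mfun T y ∈ Rset T x
  have hmyR : mfun T y ∈ Rset T x := by
    refine Finset.mem_filter.2 ⟨Finset.mem_filter.2 ⟨hmyL, hxy.trans hmypre, ?_⟩,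
      fun c hc hc' => ?_⟩
    · intro he
      have h1 := hmypre.length_le
      rw [he] at hlen
      omega
    · -- x ++ [c] <+: mfun T y and y <+: mfun T y, with |x|+1 ≤ |y|
      have hcomp := List.prefix_or_prefix_of_prefix hc' hmypre
      have hcy : x ++ [c] <+: y := by
        rcases hcomp with h | h
        · exact h
        · have heq : y = x ++ [c] := h.eq_of_length (by
            have := h.length_le
            simp only [List.length_append, List.length_cons, List.length_nil] at this ⊢
            omega)
          exact heq ▸ List.prefix_rfl
      exact hfxR c hc (hcy.trans hyfx)
  have h1 : ffun T x ≤ mfun T y := ffun_le hx hmyR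
  have h2 : mfun T y < ffun T y := by
    obtain ⟨c, hc⟩ := exists_char hmypre hmyne
    refine lt_of_le_of_ne (mfun_le hQy hfyQ) (fun he => ?_)
    exact (Finset.mem_filter.1 hfy).2 c hc (he ▸ hc)
  rw [hff] at h1
  exact absurd (h1.trans_lt h2) (lt_irrefl _)

end Aux

/-- for a collection of total length `N ≥ 1`, the number of
distinct right-branching strings (the internal nodes of the generalized
suffix tree, possibly including the empty string) is at most `N - 1`. -/
theorem card_rightBranching_le {α : Type*} {K : ℕ} (T : Fin K → List α)
    (hN : 1 ≤ ∑ k, (T k).length) :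
    {x : List α | RightBranching T x}.ncard ≤ (∑ k, (T k).length) - 1 := by
  classical
  letI : LinearOrder (List α) := linearOrderOfSTO WellOrderingRel
  have hLne : (Lset T).Nonempty := by
    have : ∃ k, T k ≠ [] := by
      by_contra h
      push_neg at h
      have : ∑ k, (T k).length = 0 := Finset.sum_eq_zero (fun k _ => by simp [h k])
      omega
    obtain ⟨k, hk⟩ := this
    exact ⟨T k, mem_Lset.2 ⟨hk, k, List.suffix_rfl⟩⟩
  set mn := (Lset T).min' hLne with hmn
  have hmaps : ∀ x ∈ {x : List α | RightBranching T x},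
      ffun T x ∈ (↑((Lset T).erase mn : Finset (List α)) : Set (List α)) := by
    intro x hx
    have hfQ : ffun T x ∈ Qset T x := Rset_sub (ffun_mem hx)
    have hfL : ffun T x ∈ Lset T := Qset_sub hfQ
    have hmL : mfun T x ∈ Lset T := Qset_sub (mfun_mem ⟨_, hfQ⟩)
    have h1 : mn ≤ mfun T x := Finset.min'_le _ _ hmL
    have h2 : mfun T x < ffun T x := mfun_lt_ffun hx
    simp only [Finset.mem_coe, Finset.mem_erase]
    exact ⟨fun he => absurd (he ▸ (h1.trans_lt h2)) (lt_irrefl _), hfL⟩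
  have hinj : Set.InjOn (ffun T) {x : List α | RightBranching T x} := by
    intro x hx y hy hff
    by_contra hne
    have hxf : x <+: ffun T x := (Finset.mem_filter.1 (Rset_sub (ffun_mem hx))).2.1
    have hyf : y <+: ffun T x := hff ▸ (Finset.mem_filter.1 (Rset_sub (ffun_mem hy))).2.1
    rcases List.prefix_or_prefix_of_prefix hxf hyf with h | h
    · exact inj_aux hx hy h hne hff
    · exact inj_aux hy hx h (Ne.symm hne) hff.symm
  have := Set.ncard_le_ncard_of_injOn (ffun T) hmaps hinj
    (((Lset T).erase mn).finite_toSet)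
  refine this.trans ?_
  rw [Set.ncard_coe_finset, Finset.card_erase_of_mem ((Lset T).min'_mem hLne)]
  have := Lset_card T
  omega
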